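/- (Multi-Hamiltonian representation, formula (bH).) Extend the family of Hamiltonians by setting h_j := c_{1−j} (the coordinate function) for j = 0, −1, …, −N+1. Then for every r ∈ {0,…,N}, every k ∈ {1,…,n} with k − r ≥ 1 − N, and every point x ∈ Ω × ℝⁿ × ℝᴺ: Π_r(x) · ∇h_{k−r}(x) = X_k(x), where ∇ denotes the gradient with respect to the ordered coordinates (λ_1,…,λ_n, μ_1,…,μ_n, c_1,…,c_N). In particular X_k = Π_0 ∇h_k = Π_1 ∇h_{k−1} = ⋯ = Π_N ∇h_{k−N} whenever the indices are defined, so each X_k is (N+1)-Hamiltonian. -/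

import Mathlib

open Finset Function Matrix

noncomputable section

/-- Evaluation of a Laurent polynomial `p ∈ ℝ[λ,λ⁻¹]` at a real number `x`
(meaningful for `x ≠ 0`, using `zpow`). -/
def leval (p : LaurentPolynomial ℝ) (x : ℝ) : ℝ :=
  Finsupp.sum p.coeff fun k a => a * x ^ k

/-- Index type for the ordered coordinates `(λ_1,…,λ_n, μ_1,…,μ_n, c_1,…,c_N)`. -/
abbrev Idx (n N : ℕ) := Fin n ⊕ (Fin n ⊕ Fin N)

/-- The extended phase space `ℝ^{2n+N}`. -/
abbrev Phase (n N : ℕ) := Idx n N → ℝ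

def lamOf {n N : ℕ} (x : Phase n N) (i : Fin n) : ℝ := x (Sum.inl i)
def muOf {n N : ℕ} (x : Phase n N) (i : Fin n) : ℝ := x (Sum.inr (Sum.inl i))
def cOf {n N : ℕ} (x : Phase n N) (j : Fin N) : ℝ := x (Sum.inr (Sum.inr j))

/-- The subset `Ω × ℝⁿ × ℝᴺ` of the extended phase space: points whose `λ`-coordinates are
nonzero and pairwise distinct. -/
def Reg (n N : ℕ) : Set (Phase n N) :=
  {x | (∀ i, lamOf x i ≠ 0) ∧ Function.Injective (lamOf x)}

/-- `H` is the family of curve-`s` Stäckel Hamiltonians on the extended phase space: it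
satisfies the curve-`s` separation relations
`σ(λᵢ)λᵢ⁻ˢ + Σ_{k=s+1}^{N} c_k λᵢ^{n+k-s-1} + Σ_{q=1}^{n} h_q λᵢ^{n-q}
  + Σ_{k=1}^{s} c_k λᵢ^{k-s-1} = f(λᵢ) λᵢˢ μᵢ²`
at every point of `Ω × ℝⁿ × ℝᴺ` (0-based indexing: `H x q` is `h_{q+1}`, etc.).  These
relations determine `H` uniquely there, by invertibility of the Vandermonde matrix. -/
def SepSolP (n N : ℕ) (f σ : LaurentPolynomial ℝ) (s : ℕ)
    (H : Phase n N → Fin n → ℝ) : Prop :=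
  ∀ x ∈ Reg n N, ∀ i : Fin n,
    leval σ (lamOf x i) * lamOf x i ^ (-(s : ℤ))
      + (∑ j : Fin N,
          if s ≤ (j : ℕ) then cOf x j * lamOf x i ^ ((n : ℤ) + (j : ℕ) - (s : ℕ))
          else cOf x j * lamOf x i ^ (((j : ℕ) : ℤ) - (s : ℕ)))
      + (∑ q : Fin n, H x q * lamOf x i ^ ((n : ℤ) - 1 - (q : ℕ)))
      = leval f (lamOf x i) * lamOf x i ^ (s : ℤ) * muOf x i ^ 2

/-- Partial derivative `∂F/∂x_l` of a scalar function on the extended phase space. -/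
def pd {n N : ℕ} (F : Phase n N → ℝ) (x : Phase n N) (l : Idx n N) : ℝ :=
  deriv (fun t => F (Function.update x l t)) (x l)

/-- The Hamiltonian vector field `X_k^{(s)}` of the curve-`s` system: its components in
the ordered coordinates `(λ, μ, c)` are
`(∂h_k/∂μ_1, …, ∂h_k/∂μ_n, -∂h_k/∂λ_1, …, -∂h_k/∂λ_n, 0, …, 0)`. -/
def XFP {n N : ℕ} (H : Phase n N → Fin n → ℝ) (k : Fin n) (x : Phase n N) : Phase n N :=
  Sum.elim (fun i => pd (fun y => H y k) x (Sum.inr (Sum.inl i)))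
    (Sum.elim (fun i => - pd (fun y => H y k) x (Sum.inl i)) fun _ => 0)

/-- The Poisson matrix `Π_a` (in the curve-0 coordinates) of the paper:
`Π_a(x) = Σᵢ λᵢᵃ (E_{i,n+i} - E_{n+i,i})
  + Σ_{j=1}^{a} (X_j(x) e_{2n+a-j+1}ᵀ - e_{2n+a-j+1} X_j(x)ᵀ)`,
where `X_j` is the `j`-th Hamiltonian vector field of the curve-0 system `H`
(1-based indexing in the paper; 0-based internally). -/
def PiMat (n N : ℕ) (hNn : N ≤ n) (a : ℕ) (haN : a ≤ N)
    (H : Phase n N → Fin n → ℝ) (x : Phase n N) : Matrix (Idx n N) (Idx n N) ℝ :=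
  (∑ i : Fin n,
      lamOf x i ^ a •
        (Matrix.single (Sum.inl i) (Sum.inr (Sum.inl i)) (1 : ℝ)
          - Matrix.single (Sum.inr (Sum.inl i)) (Sum.inl i) (1 : ℝ)))
    + ∑ j : Fin a,
        (Matrix.vecMulVec (XFP H ⟨(j : ℕ), by have := j.isLt; omega⟩ x)
            (Pi.single (Sum.inr (Sum.inr
              (⟨a - (j : ℕ) - 1, by have := j.isLt; omega⟩ : Fin N))) 1)
          - Matrix.vecMulVec
            (Pi.single (Sum.inr (Sum.inr
              (⟨a - (j : ℕ) - 1, by have := j.isLt; omega⟩ : Fin N))) (1 : ℝ))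
            (XFP H ⟨(j : ℕ), by have := j.isLt; omega⟩ x))

namespace MHR

variable {n N : ℕ}

/-- The Vandermonde-type matrix of the separation relations. -/
def Vm (n : ℕ) (lam : Fin n → ℝ) : Matrix (Fin n) (Fin n) ℝ :=
  fun i q => lam i ^ (n - 1 - (q : ℕ))

lemma det_Vm_ne_zero {lam : Fin n → ℝ} (hinj : Function.Injective lam) :
    (Vm n lam).det ≠ 0 := by
  have hV : Vm n lam = (Matrix.vandermonde lam).submatrix id ⇑(Fin.revPerm (n := n)) := by
    funext i q
    simp only [Vm, Matrix.vandermonde, Matrix.submatrix_apply, id_eq, Matrix.of_apply,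
      Fin.revPerm_apply, Fin.val_rev]
    congr 1
    omega
  rw [hV, Matrix.det_permute']
  have h2 : (Matrix.vandermonde lam).det ≠ 0 := by
    rw [Matrix.det_vandermonde]
    refine Finset.prod_ne_zero_iff.2 fun i _ => Finset.prod_ne_zero_iff.2 fun j hj => ?_
    have : i ≠ j := by
      intro h; subst h; simp at hj
    exact sub_ne_zero.2 fun hc => this (hinj hc.symm)
  rcases Int.units_eq_one_or (Equiv.Perm.sign (Fin.revPerm (n := n))) with h | h <;>
    simp [h, h2]

lemma mulVec_inj {M : Matrix (Fin n) (Fin n) ℝ} (hdet : M.det ≠ 0) {u v : Fin n → ℝ}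
    (h : M *ᵥ u = M *ᵥ v) : u = v := by
  have h2 : M.adjugate *ᵥ (M *ᵥ u) = M.adjugate *ᵥ (M *ᵥ v) := by rw [h]
  simp only [Matrix.mulVec_mulVec, Matrix.adjugate_mul,
    Matrix.smul_mulVec, Matrix.one_mulVec] at h2
  exact smul_right_injective _ hdet h2

/-- The right-hand side of the linear (Vandermonde) system determining the Hamiltonians. -/
def bfun (N : ℕ) (f σ : LaurentPolynomial ℝ) (y : Phase n N) (i : Fin n) : ℝ :=
  leval f (lamOf y i) * muOf y i ^ 2 - leval σ (lamOf y i)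
    - ∑ j : Fin N, cOf y j * lamOf y i ^ (n + (j : ℕ))

lemma sep_row {f σ : LaurentPolynomial ℝ} {H : Phase n N → Fin n → ℝ}
    (hH : SepSolP n N f σ 0 H) {x : Phase n N} (hx : x ∈ Reg n N) (p : Fin n) :
    ∑ q, Vm n (lamOf x) p q * H x q = bfun N f σ x p := by
  have h := hH x hx p
  simp only [Nat.cast_zero, neg_zero, zpow_zero, mul_one, CharP.cast_eq_zero, sub_zero,
    Nat.zero_le, if_true] at h
  have e2 : (∑ j : Fin N, cOf x j * lamOf x p ^ ((n : ℤ) + ((j : ℕ) : ℤ)))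
      = ∑ j : Fin N, cOf x j * lamOf x p ^ (n + (j : ℕ)) := by
    refine Finset.sum_congr rfl fun j _ => ?_
    rw [show (n : ℤ) + ((j : ℕ) : ℤ) = ((n + (j : ℕ) : ℕ) : ℤ) by push_cast; ring,
      zpow_natCast]
  have e3 : (∑ q : Fin n, H x q * lamOf x p ^ ((n : ℤ) - 1 - ((q : ℕ) : ℤ)))
      = ∑ q : Fin n, Vm n (lamOf x) p q * H x q := by
    refine Finset.sum_congr rfl fun q _ => ?_
    rw [show (n : ℤ) - 1 - ((q : ℕ) : ℤ) = ((n - 1 - (q : ℕ) : ℕ) : ℤ) by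
        have := q.isLt; omega, zpow_natCast]
    simp only [Vm]; ring
  rw [e2, e3] at h
  simp only [bfun]
  linarith

lemma isOpen_reg : IsOpen (Reg n N) := by
  have hR : Reg n N = (⋂ i : Fin n, {x : Phase n N | x (Sum.inl i) ≠ 0}) ∩
      ⋂ (p : Fin n × Fin n) (_ : p.1 ≠ p.2),
        {x : Phase n N | x (Sum.inl p.1) ≠ x (Sum.inl p.2)} := by
    ext x
    simp only [Reg, Set.mem_setOf_eq, Set.mem_inter_iff, Set.mem_iInter, lamOf]
    constructor
    · rintro ⟨h0, hinj⟩
      exact ⟨h0, fun p hp hc => hp (hinj hc)⟩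
    · rintro ⟨h0, hinj⟩
      refine ⟨h0, fun i j hij => ?_⟩
      by_contra hne
      exact hinj (i, j) hne hij
  rw [hR]
  refine IsOpen.inter (isOpen_iInter_of_finite fun i => ?_)
    (isOpen_iInter_of_finite fun p => isOpen_iInter_of_finite fun _ => ?_)
  · exact isOpen_ne_fun (continuous_apply _) continuous_const
  · exact isOpen_ne_fun (continuous_apply _) (continuous_apply _)

lemma cont_update (x : Phase n N) (l : Idx n N) :
    Continuous (fun t : ℝ => Function.update x l t) := by
  refine continuous_pi fun p => ?_
  simp only [Function.update_apply]
  by_cases h : p = l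
  · simpa [h] using continuous_id'
  · simpa [h] using continuous_const

lemma eventually_reg {x : Phase n N} (hx : x ∈ Reg n N) (l : Idx n N) :
    ∀ᶠ t in nhds (x l), Function.update x l t ∈ Reg n N := by
  have := (isOpen_reg.preimage (cont_update x l)).mem_nhds
    (by simpa [Function.update_eq_self] using hx : x l ∈ (fun t => Function.update x l t) ⁻¹' Reg n N)
  exact this

lemma diff_update (x : Phase n N) (l p : Idx n N) :
    Differentiable ℝ (fun t : ℝ => Function.update x l t p) := by
  by_cases h : p = l
  · subst h; simpa [Function.update_self] using differentiable_id
  · simpa [Function.update_of_ne h] using differentiable_const (x p)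

lemma differentiableAt_leval (p : LaurentPolynomial ℝ) {t : ℝ} (ht : t ≠ 0) :
    DifferentiableAt ℝ (leval p) t := by
  have : (leval p) = fun s : ℝ => ∑ k ∈ p.coeff.support, p.coeff k * s ^ (k : ℤ) := by
    funext s; rfl
  rw [this]
  exact DifferentiableAt.fun_sum fun k _ =>
    (differentiableAt_zpow.mpr (Or.inl ht)).const_mul _

lemma differentiableAt_det {m : ℕ} {M : ℝ → Matrix (Fin m) (Fin m) ℝ} {t : ℝ}
    (h : ∀ i j, DifferentiableAt ℝ (fun t => M t i j) t) :
    DifferentiableAt ℝ (fun t => (M t).det) t := by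
  simp only [Matrix.det_apply']
  exact DifferentiableAt.fun_sum fun σg _ =>
    DifferentiableAt.const_mul (DifferentiableAt.fun_finsetProd fun i _ => h _ _) _

/-- The explicit (Cramer-type) formula for the Hamiltonians. -/
def Hform (N : ℕ) (f σ : LaurentPolynomial ℝ) (y : Phase n N) (q : Fin n) : ℝ :=
  (Vm n (lamOf y)).det⁻¹ * ((Vm n (lamOf y)).adjugate *ᵥ bfun N f σ y) q

lemma H_eq_Hform {f σ : LaurentPolynomial ℝ} {H : Phase n N → Fin n → ℝ}
    (hH : SepSolP n N f σ 0 H) {x : Phase n N} (hx : x ∈ Reg n N) (q : Fin n) :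
    H x q = Hform N f σ x q := by
  have hm : Vm n (lamOf x) *ᵥ H x = bfun N f σ x := by
    funext p
    simpa [Matrix.mulVec, dotProduct] using sep_row hH hx p
  have h2 : (Vm n (lamOf x)).adjugate *ᵥ (Vm n (lamOf x) *ᵥ H x)
      = (Vm n (lamOf x)).det • H x := by
    simp only [Matrix.mulVec_mulVec, Matrix.adjugate_mul, Matrix.smul_mulVec,
      Matrix.one_mulVec]
  rw [hm] at h2
  have hdet := det_Vm_ne_zero (n := n) hx.2
  have := congrFun h2 q
  simp only [Pi.smul_apply, smul_eq_mul] at this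
  rw [Hform, this]
  field_simp

lemma diffAt_bfun {f σ : LaurentPolynomial ℝ} {x : Phase n N} (hx : x ∈ Reg n N)
    (l : Idx n N) (p : Fin n) :
    DifferentiableAt ℝ (fun t => bfun N f σ (Function.update x l t) p) (x l) := by
  have hupd : ∀ p' : Idx n N, DifferentiableAt ℝ (fun t => Function.update x l t p') (x l) :=
    fun p' => (diff_update x l p') (x l)
  have hval : ∀ p' : Idx n N, (fun t => Function.update x l t p') (x l) = x p' := by
    intro p'; simp [Function.update_eq_self]
  have hlev : ∀ g : LaurentPolynomial ℝ,
      DifferentiableAt ℝ (fun t => leval g (Function.update x l t (Sum.inl p))) (x l) := by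
    intro g
    have := (differentiableAt_leval g
      (by rw [Function.update_eq_self]; exact hx.1 p)).comp (x l) (hupd (Sum.inl p))
    exact this
  simp only [bfun, lamOf, muOf, cOf]
  exact (((hlev f).mul ((hupd _).pow 2)).sub (hlev σ)).sub
    (DifferentiableAt.fun_sum fun j _ => (hupd _).mul ((hupd _).pow _))

lemma diffAt_g {f σ : LaurentPolynomial ℝ} {H : Phase n N → Fin n → ℝ}
    (hH : SepSolP n N f σ 0 H) {x : Phase n N} (hx : x ∈ Reg n N) (l : Idx n N)
    (q : Fin n) :
    DifferentiableAt ℝ (fun t => H (Function.update x l t) q) (x l) := by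
  have hev : (fun t => H (Function.update x l t) q)
      =ᶠ[nhds (x l)] (fun t => Hform N f σ (Function.update x l t) q) :=
    (eventually_reg hx l).mono fun t ht => H_eq_Hform hH ht q
  rw [hev.differentiableAt_iff]
  have hupd : ∀ p' : Idx n N, DifferentiableAt ℝ (fun t => Function.update x l t p') (x l) :=
    fun p' => (diff_update x l p') (x l)
  have hVent : ∀ i q' : Fin n,
      DifferentiableAt ℝ (fun t => Vm n (lamOf (Function.update x l t)) i q') (x l) := by
    intro i q'
    simp only [Vm, lamOf]
    exact (hupd _).pow _
  have hdet : DifferentiableAt ℝ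
      (fun t => (Vm n (lamOf (Function.update x l t))).det) (x l) :=
    differentiableAt_det fun i j => hVent i j
  have hdetne : (Vm n (lamOf (Function.update x l (x l)))).det ≠ 0 := by
    rw [Function.update_eq_self]
    exact det_Vm_ne_zero hx.2
  have hadj : ∀ i j : Fin n,
      DifferentiableAt ℝ
        (fun t => (Vm n (lamOf (Function.update x l t))).adjugate i j) (x l) := by
    intro i j
    simp only [Matrix.adjugate_apply]
    refine differentiableAt_det fun a b => ?_
    simp only [Matrix.updateRow_apply]
    by_cases hab : a = j
    · simp [hab]
    · simpa [hab] using hVent a b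
  have hb : ∀ p : Fin n,
      DifferentiableAt ℝ (fun t => bfun N f σ (Function.update x l t) p) (x l) :=
    fun p => diffAt_bfun hx l p
  simp only [Hform, Matrix.mulVec, dotProduct]
  exact (hdet.inv hdetne).mul (DifferentiableAt.fun_sum fun p _ => (hadj q p).mul (hb p))

/-- Core differentiated relation: if the `p`-th row of the system does not involve the
coordinate `l` through the Vandermonde matrix, then the row of the differentiated system
reads `∑ q V p q ∂h_q/∂x_l = (d/dt) b_p`. -/
lemma core_rel {f σ : LaurentPolynomial ℝ} {H : Phase n N → Fin n → ℝ}
    (hH : SepSolP n N f σ 0 H) {x : Phase n N} (hx : x ∈ Reg n N) (l : Idx n N)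
    (p : Fin n) (hpl : Sum.inl p ≠ l) {D : ℝ}
    (hb : HasDerivAt (fun t => bfun N f σ (Function.update x l t) p) D (x l)) :
    ∑ q, Vm n (lamOf x) p q * pd (fun y => H y q) x l = D := by
  have hg : ∀ q : Fin n, DifferentiableAt ℝ (fun t => H (Function.update x l t) q) (x l) :=
    fun q => diffAt_g hH hx l q
  have hΦ : (fun t => ∑ q, Vm n (lamOf x) p q * H (Function.update x l t) q)
      =ᶠ[nhds (x l)] (fun t => bfun N f σ (Function.update x l t) p) := by
    filter_upwards [eventually_reg hx l] with t ht
    have hrow : ∀ q : Fin n, Vm n (lamOf x) p q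
        = Vm n (lamOf (Function.update x l t)) p q := by
      intro q
      simp only [Vm, lamOf, Function.update_of_ne hpl]
    calc (∑ q, Vm n (lamOf x) p q * H (Function.update x l t) q)
        = ∑ q, Vm n (lamOf (Function.update x l t)) p q * H (Function.update x l t) q :=
          Finset.sum_congr rfl fun q _ => by rw [hrow]
      _ = bfun N f σ (Function.update x l t) p := sep_row hH ht p
  have hd1 : HasDerivAt (fun t => ∑ q, Vm n (lamOf x) p q * H (Function.update x l t) q)
      (∑ q, Vm n (lamOf x) p q * deriv (fun t => H (Function.update x l t) q) (x l)) (x l) :=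
    HasDerivAt.fun_sum fun q _ => ((hg q).hasDerivAt).const_mul _
  have : (∑ q, Vm n (lamOf x) p q * deriv (fun t => H (Function.update x l t) q) (x l)) = D := by
    rw [← hd1.deriv, hΦ.deriv_eq, hb.deriv]
  rw [← this]
  rfl

section Rels

variable {f σ : LaurentPolynomial ℝ} {H : Phase n N → Fin n → ℝ}
  (hH : SepSolP n N f σ 0 H) {x : Phase n N} (hx : x ∈ Reg n N)

include hH hx

lemma rel_mu (i0 p : Fin n) (hp : p ≠ i0) :
    ∑ q, Vm n (lamOf x) p q * pd (fun y => H y q) x (Sum.inr (Sum.inl i0)) = 0 := by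
  refine core_rel hH hx _ p (by simp) ?_
  have hconst : (fun t => bfun N f σ (Function.update x (Sum.inr (Sum.inl i0)) t) p)
      = fun _ => bfun N f σ x p := by
    funext t
    simp [bfun, lamOf, muOf, cOf, Function.update_apply, hp]
  rw [hconst]
  exact hasDerivAt_const _ _

lemma rel_lam (i0 p : Fin n) (hp : p ≠ i0) :
    ∑ q, Vm n (lamOf x) p q * pd (fun y => H y q) x (Sum.inl i0) = 0 := by
  refine core_rel hH hx _ p (by simp [hp]) ?_
  have hconst : (fun t => bfun N f σ (Function.update x (Sum.inl i0) t) p)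
      = fun _ => bfun N f σ x p := by
    funext t
    simp [bfun, lamOf, muOf, cOf, Function.update_apply, hp]
  rw [hconst]
  exact hasDerivAt_const _ _

lemma rel_c (j0 : Fin N) (p : Fin n) :
    ∑ q, Vm n (lamOf x) p q * pd (fun y => H y q) x (Sum.inr (Sum.inr j0))
      = -(lamOf x p ^ (n + (j0 : ℕ))) := by
  refine core_rel hH hx _ p (by simp) ?_
  have heq : (fun t => bfun N f σ (Function.update x (Sum.inr (Sum.inr j0)) t) p)
      = fun t => (leval f (lamOf x p) * muOf x p ^ 2 - leval σ (lamOf x p))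
          - ∑ j : Fin N, (if j = j0 then t else cOf x j) * lamOf x p ^ (n + (j : ℕ)) := by
    funext t
    simp [bfun, lamOf, muOf, cOf, Function.update_apply]
  rw [heq]
  have hsum : HasDerivAt
      (fun t => ∑ j : Fin N, (if j = j0 then t else cOf x j) * lamOf x p ^ (n + (j : ℕ)))
      (∑ j : Fin N, (if j = j0 then lamOf x p ^ (n + (j : ℕ)) else 0))
      (x (Sum.inr (Sum.inr j0))) := by
    refine HasDerivAt.fun_sum fun j _ => ?_
    by_cases hj : j = j0
    · simpa [hj] using hasDerivAt_mul_const (c := lamOf x p ^ (n + (j0 : ℕ)))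
        (x := x (Sum.inr (Sum.inr j0)))
    · simpa [hj] using hasDerivAt_const (x (Sum.inr (Sum.inr j0)))
        (cOf x j * lamOf x p ^ (n + (j : ℕ)))
  have := (hasDerivAt_const (x (Sum.inr (Sum.inr j0)))
      (leval f (lamOf x p) * muOf x p ^ 2 - leval σ (lamOf x p))).fun_sub hsum
  simpa [Finset.sum_ite_eq'] using this

end Rels

lemma keyCross {lam : Fin n → ℝ} (hdet : (Vm n lam).det ≠ 0) (i : Fin n)
    {u w : Fin n → ℝ} {a b : ℝ}
    (hu : ∀ p, ∑ q, Vm n lam p q * u q = if p = i then a else 0)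
    (hw : ∀ p, ∑ q, Vm n lam p q * w q = if p = i then b else 0)
    (j m : Fin n) : u j * w m = u m * w j := by
  have hkey : b • u = a • w := by
    refine mulVec_inj hdet ?_
    funext p
    simp only [Matrix.mulVec, dotProduct, Pi.smul_apply, smul_eq_mul]
    rw [show (∑ q, Vm n lam p q * (b * u q)) = b * ∑ q, Vm n lam p q * u q by
      rw [Finset.mul_sum]; exact Finset.sum_congr rfl fun q _ => by ring]
    rw [show (∑ q, Vm n lam p q * (a * w q)) = a * ∑ q, Vm n lam p q * w q by
      rw [Finset.mul_sum]; exact Finset.sum_congr rfl fun q _ => by ring]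
    rw [hu, hw]
    by_cases hpi : p = i <;> simp [hpi] <;> ring
  by_cases ha : a = 0
  · have hu0 : u = 0 := by
      refine mulVec_inj hdet (v := 0) ?_
      funext p
      simp only [Matrix.mulVec, dotProduct, Matrix.mulVec_zero]
      rw [hu p]
      simp [ha]
    simp [hu0]
  · have hw' : ∀ s : Fin n, w s = (b / a) * u s := by
      intro s
      have h1 := congrFun hkey s
      simp only [Pi.smul_apply, smul_eq_mul] at h1
      field_simp
      linarith [h1]
    rw [hw' j, hw' m]; ring

lemma keyA {lam : Fin n → ℝ} (hdet : (Vm n lam).det ≠ 0) (i : Fin n)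
    {u : Fin n → ℝ} {a : ℝ}
    (hu : ∀ p, ∑ q, Vm n lam p q * u q = if p = i then a else 0)
    {d : Fin N → Fin n → ℝ}
    (hd : ∀ (j : Fin N) (p : Fin n),
      ∑ q, Vm n lam p q * d j q = -(lam p ^ (n + (j : ℕ))))
    (r m0 : ℕ) (hrN : r ≤ N) (hm : m0 + r < n) :
    lam i ^ r * u ⟨m0, by omega⟩
      + ∑ j : Fin r, d ⟨r - 1 - (j : ℕ), by have := j.isLt; omega⟩ ⟨m0, by omega⟩
          * u ⟨(j : ℕ), by have := j.isLt; omega⟩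
      = u ⟨m0 + r, hm⟩ := by
  set A : Fin n → ℝ := fun q => lam i ^ r * u q
    + ∑ j : Fin r, d ⟨r - 1 - (j : ℕ), by have := j.isLt; omega⟩ q
        * u ⟨(j : ℕ), by have := j.isLt; omega⟩ with hA
  set B : Fin n → ℝ :=
    fun q => if h : (q : ℕ) + r < n then u ⟨(q : ℕ) + r, h⟩ else 0 with hB
  have hAB : A = B := by
    refine mulVec_inj hdet ?_
    funext p
    simp only [Matrix.mulVec, dotProduct]
    have hL : (∑ q, Vm n lam p q * A q)
        = lam i ^ r * (if p = i then a else 0)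
          - ∑ j : Fin r, lam p ^ (n - 1 + r - (j : ℕ))
              * u ⟨(j : ℕ), by have := j.isLt; omega⟩ := by
      have expand : ∀ q, Vm n lam p q * A q
          = lam i ^ r * (Vm n lam p q * u q)
            + ∑ j : Fin r, (Vm n lam p q * d ⟨r - 1 - (j : ℕ), by have := j.isLt; omega⟩ q)
                * u ⟨(j : ℕ), by have := j.isLt; omega⟩ := by
        intro q
        rw [hA]
        simp only []
        rw [mul_add, Finset.mul_sum]
        congr 1
        · ring
        · exact Finset.sum_congr rfl fun j _ => by ring
      rw [Finset.sum_congr rfl fun q _ => expand q, Finset.sum_add_distrib,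
        ← Finset.mul_sum, hu p, Finset.sum_comm]
      have hsum2 : (∑ y : Fin r, ∑ x : Fin n,
            Vm n lam p x * d ⟨r - 1 - (y : ℕ), by have := y.isLt; omega⟩ x
              * u ⟨(y : ℕ), by have := y.isLt; omega⟩)
          = -∑ j : Fin r, lam p ^ (n - 1 + r - (j : ℕ))
              * u ⟨(j : ℕ), by have := j.isLt; omega⟩ := by
        rw [← Finset.sum_neg_distrib]
        refine Finset.sum_congr rfl fun y _ => ?_
        rw [show (∑ x, Vm n lam p x * d ⟨r - 1 - (y : ℕ), by have := y.isLt; omega⟩ x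
              * u ⟨(y : ℕ), by have := y.isLt; omega⟩)
            = (∑ x, Vm n lam p x * d ⟨r - 1 - (y : ℕ), by have := y.isLt; omega⟩ x)
              * u ⟨(y : ℕ), by have := y.isLt; omega⟩ from (Finset.sum_mul ..).symm, hd]
        rw [show n + (((⟨r - 1 - (y : ℕ), by have := y.isLt; omega⟩ : Fin N) : ℕ))
            = n - 1 + r - (y : ℕ) from by have := y.isLt; simp; omega]
        ring
      rw [hsum2]
      ring
    have hR : (∑ q, Vm n lam p q * B q)
        = lam p ^ r * (if p = i then a else 0)
          - ∑ j : Fin r, lam p ^ (n - 1 + r - (j : ℕ))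
              * u ⟨(j : ℕ), by have := j.isLt; omega⟩ := by
      set F : ℕ → ℝ :=
        fun t => if h : t < n then lam p ^ (n - 1 + r - t) * u ⟨t, h⟩ else 0 with hF
      have hrn : r ≤ n := by omega
      have hstep_a : (∑ t ∈ Finset.range n, F t)
          = lam p ^ r * (if p = i then a else 0) := by
        rw [← Fin.sum_univ_eq_sum_range F n, ← hu p, Finset.mul_sum]
        refine Finset.sum_congr rfl fun q _ => ?_
        rw [hF]
        simp only []
        rw [dif_pos q.isLt,
          show n - 1 + r - (q : ℕ) = r + (n - 1 - (q : ℕ)) from by have := q.isLt; omega,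
          pow_add]
        simp only [Vm]
        ring
      have hstep_b : (∑ q, Vm n lam p q * B q)
          = ∑ t ∈ Finset.range (n - r), F (r + t) := by
        have e1 : (∑ q, Vm n lam p q * B q)
            = ∑ t ∈ Finset.range n,
                (if h : t + r < n then lam p ^ (n - 1 - t) * u ⟨t + r, h⟩ else 0) := by
          rw [← Fin.sum_univ_eq_sum_range
            (fun t => if h : t + r < n then lam p ^ (n - 1 - t) * u ⟨t + r, h⟩ else 0) n]
          refine Finset.sum_congr rfl fun q _ => ?_
          rw [hB]
          simp only []
          by_cases hq : (q : ℕ) + r < n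
          · rw [dif_pos hq, dif_pos hq]
            simp only [Vm]
          · rw [dif_neg hq, dif_neg hq, mul_zero]
        rw [e1]
        rw [← Finset.sum_subset (Finset.range_subset_range.mpr (by omega : n - r ≤ n))
          (fun t ht hnt => by
            rw [dif_neg]
            simp only [Finset.mem_range] at ht hnt
            omega)]
        refine Finset.sum_congr rfl fun t ht => ?_
        simp only [Finset.mem_range] at ht
        rw [dif_pos (by omega : t + r < n), hF]
        simp only []
        rw [dif_pos (by omega : r + t < n)]
        congr 1
        · congr 1
          omega
        · exact congrArg u (Fin.mk_eq_mk.mpr (by omega))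
      have hstep_c : (∑ t ∈ Finset.range r, F t)
          = ∑ j : Fin r, lam p ^ (n - 1 + r - (j : ℕ))
              * u ⟨(j : ℕ), by have := j.isLt; omega⟩ := by
        rw [← Fin.sum_univ_eq_sum_range F r]
        refine Finset.sum_congr rfl fun j _ => ?_
        rw [hF]
        simp only []
        rw [dif_pos (by have := j.isLt; omega : (j : ℕ) < n)]
      have hsplit : (∑ t ∈ Finset.range r, F t) + (∑ t ∈ Finset.range (n - r), F (r + t))
          = ∑ t ∈ Finset.range n, F t := by
        rw [← Finset.sum_Ico_eq_sum_range]
        simp only [Finset.range_eq_Ico]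
        exact Finset.sum_Ico_consecutive _ (Nat.zero_le r) hrn
      rw [hstep_b]
      rw [hstep_a, hstep_c] at hsplit
      linarith [hsplit]
    rw [hL, hR]
    by_cases hpi : p = i <;> simp [hpi]
  have hfin := congrFun hAB ⟨m0, by omega⟩
  rw [hB] at hfin
  simp only [] at hfin
  rw [dif_pos hm] at hfin
  rw [hA] at hfin
  exact hfin

section Rows

variable (hNn : N ≤ n) (r : ℕ) (hrN : r ≤ N) (H : Phase n N → Fin n → ℝ)
  (x : Phase n N) (v : Idx n N → ℝ)

lemma Pi_row_lam (i : Fin n) :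
    (PiMat n N hNn r hrN H x *ᵥ v) (Sum.inl i)
      = lamOf x i ^ r * v (Sum.inr (Sum.inl i))
        + ∑ j : Fin r, XFP H ⟨(j : ℕ), by have := j.isLt; omega⟩ x (Sum.inl i)
            * v (Sum.inr (Sum.inr (⟨r - (j : ℕ) - 1, by have := j.isLt; omega⟩ : Fin N))) := by
  simp only [PiMat, Matrix.mulVec, dotProduct, Matrix.add_apply, Matrix.sum_apply,
    Matrix.smul_apply, Matrix.sub_apply, smul_eq_mul, Matrix.vecMulVec_apply,
    Matrix.single, Matrix.of_apply, Pi.single_apply, reduceCtorEq,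
    Sum.inl.injEq, Sum.inr.injEq, false_and, and_false, if_false, sub_zero, zero_mul,
    mul_zero, mul_ite, mul_one, ite_mul, zero_sub, mul_neg, neg_zero, add_mul, sub_mul,
    Finset.sum_add_distrib, Fintype.sum_sum_type, Finset.sum_ite_eq, Finset.sum_ite_eq']
  simp only [Finset.sum_const_zero, zero_mul, add_zero, zero_add, ite_and,
    Finset.sum_ite_eq', Finset.mem_univ, if_true, ite_mul, zero_mul, Finset.sum_mul,
    Finset.sum_ite_eq]
  rw [Finset.sum_comm]
  simp only [Finset.sum_ite_eq, Finset.sum_ite_eq', Finset.mem_univ, if_true]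

lemma Pi_row_mu (i : Fin n) :
    (PiMat n N hNn r hrN H x *ᵥ v) (Sum.inr (Sum.inl i))
      = -(lamOf x i ^ r) * v (Sum.inl i)
        + ∑ j : Fin r, XFP H ⟨(j : ℕ), by have := j.isLt; omega⟩ x (Sum.inr (Sum.inl i))
            * v (Sum.inr (Sum.inr (⟨r - (j : ℕ) - 1, by have := j.isLt; omega⟩ : Fin N))) := by
  simp only [PiMat, Matrix.mulVec, dotProduct, Matrix.add_apply, Matrix.sum_apply,
    Matrix.smul_apply, Matrix.sub_apply, smul_eq_mul, Matrix.vecMulVec_apply,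
    Matrix.single, Matrix.of_apply, Pi.single_apply, reduceCtorEq,
    Sum.inl.injEq, Sum.inr.injEq, false_and, and_false, if_false, sub_zero, zero_mul,
    mul_zero, mul_ite, mul_one, ite_mul, zero_sub, mul_neg, neg_zero, add_mul, sub_mul,
    Finset.sum_add_distrib, Fintype.sum_sum_type, Finset.sum_ite_eq, Finset.sum_ite_eq']
  simp only [Finset.sum_const_zero, zero_mul, add_zero, zero_add, ite_and,
    Finset.sum_neg_distrib, neg_mul, Finset.sum_ite_eq', Finset.mem_univ, if_true,
    ite_mul, Finset.sum_mul, Finset.sum_ite_eq, neg_zero]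
  rw [Finset.sum_comm]
  simp only [Finset.sum_ite_eq, Finset.sum_ite_eq', Finset.mem_univ, if_true]

lemma Pi_row_c (p : Fin N) :
    (PiMat n N hNn r hrN H x *ᵥ v) (Sum.inr (Sum.inr p))
      = -∑ j : Fin r,
          (if p = (⟨r - (j : ℕ) - 1, by have := j.isLt; omega⟩ : Fin N) then
            (∑ i : Fin n, XFP H ⟨(j : ℕ), by have := j.isLt; omega⟩ x (Sum.inl i)
                * v (Sum.inl i))
              + ∑ i : Fin n, XFP H ⟨(j : ℕ), by have := j.isLt; omega⟩ x
                  (Sum.inr (Sum.inl i)) * v (Sum.inr (Sum.inl i))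
          else 0) := by
  have key : ∀ (P : Fin r → Prop) (_ : DecidablePred P) (g h : Fin r → Fin n → ℝ),
      ((∑ x1 : Fin n, ∑ x2 : Fin r, -(if P x2 then g x2 x1 else 0))
        + ∑ x1 : Fin n, ∑ x2 : Fin r, -(if P x2 then h x2 x1 else 0))
      = -∑ x2 : Fin r, (if P x2 then (∑ x1 : Fin n, g x2 x1) + ∑ x1 : Fin n, h x2 x1
          else 0) := by
    intro P hP g h
    have e : ∀ g : Fin r → Fin n → ℝ,
        (∑ x1 : Fin n, ∑ x2 : Fin r, -(if P x2 then g x2 x1 else 0))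
          = -∑ x2 : Fin r, (if P x2 then ∑ x1 : Fin n, g x2 x1 else 0) := by
      intro g
      rw [Finset.sum_comm, ← Finset.sum_neg_distrib]
      refine Finset.sum_congr rfl fun b _ => ?_
      by_cases hb : P b <;> simp [hb]
    rw [e g, e h, ← neg_add, ← Finset.sum_add_distrib]
    congr 1
    refine Finset.sum_congr rfl fun b _ => ?_
    by_cases hb : P b <;> simp [hb]
  simp only [PiMat, Matrix.mulVec, dotProduct, Matrix.add_apply, Matrix.sum_apply,
    Matrix.smul_apply, Matrix.sub_apply, smul_eq_mul, Matrix.vecMulVec_apply,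
    Matrix.single, Matrix.of_apply, Pi.single_apply, reduceCtorEq,
    Sum.inl.injEq, Sum.inr.injEq, false_and, and_false, if_false, sub_zero, zero_mul,
    mul_zero, mul_ite, mul_one, ite_mul, zero_sub, mul_neg, neg_zero, add_mul, sub_mul,
    Finset.sum_add_distrib, Fintype.sum_sum_type, Finset.sum_ite_eq, Finset.sum_ite_eq',
    XFP, Sum.elim_inl, Sum.elim_inr, one_mul,
    Finset.sum_const_zero, add_zero, zero_add, ite_self, Finset.sum_mul, neg_mul,
    neg_neg]
  exact key _ _ _ _

end Rows

end MHR

set_option maxHeartbeats 1200000 in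
/-- multi-Hamiltonian representation, formula (bH): extending the family of
Hamiltonians by `h_j := c_{1-j}` (coordinate function) for `j = 0, -1, …, -N+1`, one has,
for every `r ∈ {0,…,N}` and `k ∈ {1,…,n}` with `k - r ≥ 1 - N`:
`Π_r(x) ∇h_{k-r}(x) = X_k(x)` on `Ω × ℝⁿ × ℝᴺ`.  In particular
`X_k = Π_0 ∇h_k = Π_1 ∇h_{k-1} = ⋯ = Π_N ∇h_{k-N}` whenever the indices are defined, so
each `X_k` is `(N+1)`-Hamiltonian.  (Below: if `k - r ≥ 1` the gradient is that of the
Hamiltonian `h_{k-r}`, otherwise it is the gradient of the coordinate function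
`c_{1-(k-r)} = c_{r-k+1}`, i.e. the corresponding standard basis vector; 1-based in the
paper, 0-based internally.) -/
theorem multi_hamiltonian_representation
    (n N : ℕ) (hn : 1 ≤ n) (hN1 : 1 ≤ N) (hNn : N ≤ n)
    (f σ : LaurentPolynomial ℝ)
    (H : Phase n N → Fin n → ℝ) (hH : SepSolP n N f σ 0 H)
    (r k : ℕ) (hrN : r ≤ N) (hk1 : 1 ≤ k) (hkn : k ≤ n)
    (hkr : 1 - (N : ℤ) ≤ (k : ℤ) - (r : ℤ))
    (x : Phase n N) (hx : x ∈ Reg n N) :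
    PiMat n N hNn r hrN H x *ᵥ
        (if h : r < k then
          (fun l => pd (fun y => H y ⟨k - r - 1, by omega⟩) x l)
        else Pi.single (Sum.inr (Sum.inr (⟨r - k, by omega⟩ : Fin N))) 1)
      = XFP H ⟨k - 1, by omega⟩ x := by
  have hxR := hx
  obtain ⟨hx0, hxinj⟩ := hx
  have hdet : (MHR.Vm n (lamOf x)).det ≠ 0 := MHR.det_Vm_ne_zero hxinj
  have hd : ∀ (j : Fin N) (p : Fin n),
      ∑ q, MHR.Vm n (lamOf x) p q * pd (fun y => H y q) x (Sum.inr (Sum.inr j))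
        = -(lamOf x p ^ (n + (j : ℕ))) := fun j p => MHR.rel_c hH hxR j p
  have hu : ∀ i p : Fin n,
      ∑ q, MHR.Vm n (lamOf x) p q * pd (fun y => H y q) x (Sum.inr (Sum.inl i))
        = if p = i then
            (∑ q, MHR.Vm n (lamOf x) i q * pd (fun y => H y q) x (Sum.inr (Sum.inl i)))
          else 0 := by
    intro i p
    by_cases hp : p = i
    · subst hp; simp
    · simp only [hp, if_false]
      exact MHR.rel_mu hH hxR i p hp
  have hw : ∀ i p : Fin n,
      ∑ q, MHR.Vm n (lamOf x) p q * pd (fun y => H y q) x (Sum.inl i)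
        = if p = i then
            (∑ q, MHR.Vm n (lamOf x) i q * pd (fun y => H y q) x (Sum.inl i))
          else 0 := by
    intro i p
    by_cases hp : p = i
    · subst hp; simp
    · simp only [hp, if_false]
      exact MHR.rel_lam hH hxR i p hp
  funext l
  by_cases hrk : r < k
  · simp only [dif_pos hrk]
    rcases l with i | i | p
    · -- λ-block row
      rw [MHR.Pi_row_lam]
      simp only [XFP, Sum.elim_inl, Sum.elim_inr]
      have hkey := MHR.keyA hdet i (hu i) hd r (k - r - 1) hrN
        (by omega : k - r - 1 + r < n)
      have hidx : (⟨k - 1, by omega⟩ : Fin n) = ⟨k - r - 1 + r, by omega⟩ :=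
        Fin.mk_eq_mk.mpr (by omega)
      rw [hidx]
      have hsum : (∑ j : Fin r, pd (fun y => H y ⟨(j : ℕ), by omega⟩) x
              (Sum.inr (Sum.inl i))
            * pd (fun y => H y ⟨k - r - 1, by omega⟩) x
              (Sum.inr (Sum.inr (⟨r - (j : ℕ) - 1, by omega⟩ : Fin N))))
          = ∑ j : Fin r, pd (fun y => H y ⟨k - r - 1, by omega⟩) x
              (Sum.inr (Sum.inr (⟨r - 1 - (j : ℕ), by omega⟩ : Fin N)))
            * pd (fun y => H y ⟨(j : ℕ), by omega⟩) x (Sum.inr (Sum.inl i)) := by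
        refine Finset.sum_congr rfl fun j _ => ?_
        rw [show (⟨r - (j : ℕ) - 1, by omega⟩ : Fin N)
            = (⟨r - 1 - (j : ℕ), by omega⟩ : Fin N) from Fin.mk_eq_mk.mpr (by omega)]
        ring
      rw [hsum]
      exact hkey
    · -- μ-block row
      rw [MHR.Pi_row_mu]
      simp only [XFP, Sum.elim_inl, Sum.elim_inr]
      have hkey := MHR.keyA hdet i (hw i) hd r (k - r - 1) hrN
        (by omega : k - r - 1 + r < n)
      have hidx : (⟨k - 1, by omega⟩ : Fin n) = ⟨k - r - 1 + r, by omega⟩ :=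
        Fin.mk_eq_mk.mpr (by omega)
      rw [hidx]
      have hsum : (∑ j : Fin r, -pd (fun y => H y ⟨(j : ℕ), by omega⟩) x (Sum.inl i)
            * pd (fun y => H y ⟨k - r - 1, by omega⟩) x
              (Sum.inr (Sum.inr (⟨r - (j : ℕ) - 1, by omega⟩ : Fin N))))
          = -∑ j : Fin r, pd (fun y => H y ⟨k - r - 1, by omega⟩) x
              (Sum.inr (Sum.inr (⟨r - 1 - (j : ℕ), by omega⟩ : Fin N)))
            * pd (fun y => H y ⟨(j : ℕ), by omega⟩) x (Sum.inl i) := by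
        rw [← Finset.sum_neg_distrib]
        refine Finset.sum_congr rfl fun j _ => ?_
        rw [show (⟨r - (j : ℕ) - 1, by omega⟩ : Fin N)
            = (⟨r - 1 - (j : ℕ), by omega⟩ : Fin N) from Fin.mk_eq_mk.mpr (by omega)]
        ring
      rw [hsum]
      linarith [hkey]
    · -- c-block row
      rw [MHR.Pi_row_c]
      simp only [XFP, Sum.elim_inl, Sum.elim_inr]
      rw [neg_eq_zero]
      refine Finset.sum_eq_zero fun j _ => ?_
      by_cases hpj : p = (⟨r - (j : ℕ) - 1, by omega⟩ : Fin N)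
      · rw [if_pos hpj, ← Finset.sum_add_distrib]
        refine Finset.sum_eq_zero fun i _ => ?_
        have hcross := MHR.keyCross hdet i (hu i) (hw i)
          (⟨(j : ℕ), by omega⟩ : Fin n) (⟨k - r - 1, by omega⟩ : Fin n)
        nlinarith [hcross]
      · rw [if_neg hpj]
  · simp only [dif_neg hrk]
    have hiff : ∀ j : Fin r, ((⟨r - (j : ℕ) - 1, by omega⟩ : Fin N)
        = (⟨r - k, by omega⟩ : Fin N)) ↔ (j = (⟨k - 1, by omega⟩ : Fin r)) := by
      intro j
      rw [Fin.mk_eq_mk, Fin.ext_iff]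
      simp only [Fin.val_mk]
      omega
    rcases l with i | i | p
    · rw [MHR.Pi_row_lam]
      simp only [Pi.single_apply, reduceCtorEq, if_false, mul_zero, zero_add,
        Sum.inr.injEq, hiff, mul_ite, mul_one, Finset.sum_ite_eq', Finset.mem_univ,
        if_true]
    · rw [MHR.Pi_row_mu]
      simp only [Pi.single_apply, reduceCtorEq, if_false, mul_zero, zero_add,
        Sum.inr.injEq, hiff, mul_ite, mul_one, Finset.sum_ite_eq', Finset.mem_univ,
        if_true]
    · rw [MHR.Pi_row_c]
      simp only [XFP, Sum.elim_inl, Sum.elim_inr, Pi.single_apply, reduceCtorEq,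
        Sum.inr.injEq, if_false, mul_zero, Finset.sum_const_zero, add_zero, zero_add,
        ite_self, neg_zero]
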